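/- Let 0 < θ < π/2 and define g : ℝ → ℝ by g(u) = (cos(u·tan θ) − cos θ)·sec²θ for |u| < θ·cot θ and g(u) = 0 otherwise. Then ∫_{ℝ} g(u)² du = sec²θ · (θ·tan θ + 3θ·cot θ − 3); equivalently, the convolution square w = g ∗ g satisfies w(0) = sec²θ · (θ·tan θ + 3θ·cot θ − 3). -/

import Mathlib

open MeasureTheory

/-- For `0 < θ < π/2`, with
`g(u) = (cos(u tan θ) − cos θ) sec²θ` for `|u| < θ cot θ` and `g(u) = 0` otherwise,
one has `∫ g(u)² du = sec²θ (θ tan θ + 3θ cot θ − 3)`; equivalently, the convolution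
square `w = g ∗ g` satisfies `w(0) = sec²θ (θ tan θ + 3θ cot θ − 3)`. -/
theorem stmt_10 (θ : ℝ) (hθ₁ : 0 < θ) (hθ₂ : θ < Real.pi / 2)
    (g w : ℝ → ℝ)
    (hg : ∀ u : ℝ, g u =
      if |u| < θ * Real.cot θ then
        (Real.cos (u * Real.tan θ) - Real.cos θ) * (1 / Real.cos θ ^ 2)
      else 0)
    (hw : ∀ u : ℝ, w u = ∫ v : ℝ, g v * g (u - v)) :
    (∫ u : ℝ, g u ^ 2) =
        (1 / Real.cos θ ^ 2) * (θ * Real.tan θ + 3 * θ * Real.cot θ - 3) ∧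
    w 0 = (1 / Real.cos θ ^ 2) * (θ * Real.tan θ + 3 * θ * Real.cot θ - 3) := by
  set c := Real.cos θ with hc_def
  set s := Real.sin θ with hs_def
  set t := Real.tan θ with ht_def
  set a := θ * Real.cot θ with ha_def
  have hc : 0 < c := Real.cos_pos_of_mem_Ioo ⟨by linarith [Real.pi_pos], hθ₂⟩
  have hs : 0 < s := Real.sin_pos_of_pos_of_lt_pi hθ₁ (by linarith [Real.pi_pos])
  have ht : 0 < t := Real.tan_pos_of_pos_of_lt_pi_div_two hθ₁ hθ₂
  have htcs : t = s / c := Real.tan_eq_sin_div_cos θ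
  have hacot : a = θ * (c / s) := by rw [ha_def, Real.cot_eq_cos_div_sin]
  have ha : 0 < a := by rw [hacot]; positivity
  have hat : a * t = θ := by
    rw [hacot, htcs]; field_simp
  -- the even symmetry of g
  have geven : ∀ v : ℝ, g (-v) = g v := by
    intro v
    rw [hg, hg]
    simp [abs_neg, neg_mul, Real.cos_neg]
  -- Step 1: reduce to an interval integral
  have hind : (fun u : ℝ => g u ^ 2) =
      Set.indicator (Set.Ioo (-a) a)
        (fun u => (Real.cos (u * t) - c) ^ 2 * (1 / c ^ 2) ^ 2) := by
    funext u
    rw [hg]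
    by_cases h : |u| < a
    · rw [if_pos h, Set.indicator_of_mem (by rcases abs_lt.mp h with ⟨h1, h2⟩; exact ⟨h1, h2⟩)]
      ring
    · rw [if_neg h, Set.indicator_of_notMem]
      · simp
      · intro hm
        exact h (abs_lt.mpr ⟨hm.1, hm.2⟩)
  -- antiderivative
  set F : ℝ → ℝ := fun u =>
    u / 2 + Real.sin (u * t) * Real.cos (u * t) / (2 * t)
      - 2 * c * (Real.sin (u * t) / t) + c ^ 2 * u with hF_def
  have hF : ∀ u ∈ Set.uIcc (-a) a, HasDerivAt F ((Real.cos (u * t) - c) ^ 2) u := by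
    intro u _
    have hut : HasDerivAt (fun u : ℝ => u * t) t u := by
      simpa using (hasDerivAt_id u).mul_const t
    have hsin : HasDerivAt (fun u : ℝ => Real.sin (u * t)) (Real.cos (u * t) * t) u :=
      hut.sin
    have hcos : HasDerivAt (fun u : ℝ => Real.cos (u * t)) (-Real.sin (u * t) * t) u :=
      hut.cos
    have h := ((((hasDerivAt_id u).div_const 2).add
        ((hsin.mul hcos).div_const (2 * t))).sub
        ((hsin.div_const t).const_mul (2 * c))).add
        ((hasDerivAt_id u).const_mul (c ^ 2))
    refine h.congr_deriv ?_
    have hpy := Real.sin_sq_add_cos_sq (u * t)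
    have ht' : t ≠ 0 := ne_of_gt ht
    field_simp
    nlinarith [hpy]
  have hcont : IntervalIntegrable (fun u => (Real.cos (u * t) - c) ^ 2) volume (-a) a := by
    exact ((Real.continuous_cos.comp (continuous_id.mul continuous_const)).sub continuous_const).pow 2 |>.intervalIntegrable _ _
  have key : (∫ u in (-a)..a, (Real.cos (u * t) - c) ^ 2) = F a - F (-a) :=
    intervalIntegral.integral_eq_sub_of_hasDerivAt hF hcont
  have hFa : F a - F (-a) = a + s * c / t - 4 * c * (s / t) + 2 * c ^ 2 * a := by
    simp only [hF_def]
    rw [neg_mul, hat, Real.sin_neg, Real.cos_neg]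
    ring
  -- main integral computation
  have main : (∫ u : ℝ, g u ^ 2) =
      (1 / c ^ 2) * (θ * t + 3 * θ * Real.cot θ - 3) := by
    rw [hind, integral_indicator measurableSet_Ioo, ← integral_Ioc_eq_integral_Ioo,
      ← intervalIntegral.integral_of_le (by linarith : -a ≤ a),
      intervalIntegral.integral_mul_const, key, hFa]
    rw [Real.cot_eq_cos_div_sin]
    rw [hacot, htcs]
    have hc' : c ≠ 0 := ne_of_gt hc
    have hs' : s ≠ 0 := ne_of_gt hs
    have hpy : s ^ 2 + c ^ 2 = 1 := Real.sin_sq_add_cos_sq θ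
    field_simp
    rw [← hs_def, ← hc_def]
    rw [mul_sub, mul_add, mul_add, mul_left_comm s θ (c * 3 * c / s), mul_div_cancel₀ _ hs']
    linear_combination (-θ) * hpy
  refine ⟨main, ?_⟩
  rw [hw]
  have : (fun v => g v * g (0 - v)) = fun v => g v ^ 2 := by
    funext v
    rw [zero_sub, geven]
    ring
  rw [this, main]
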